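/- For θ in (0, π/2], 2π(sin 2θ + 2π − 2θ) − ((2π − θ)cos θ + sin θ)² > 0. -/
import Mathlib

theorem det_ineq (θ : ℝ) (h0 : 0 < θ) (h1 : θ ≤ Real.pi / 2) :
    0 < 2 * Real.pi * (Real.sin (2 * θ) + 2 * Real.pi - 2 * θ) -
        ((2 * Real.pi - θ) * Real.cos θ + Real.sin θ) ^ 2 := by
  have hpi := Real.pi_gt_three
  set s := Real.sin θ with hs
  set c := Real.cos θ with hc
  have hsc : s ^ 2 + c ^ 2 = 1 := Real.sin_sq_add_cos_sq θ
  have h2 : Real.sin (2 * θ) = 2 * s * c := Real.sin_two_mul θ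
  have hcn : 0 ≤ c := Real.cos_nonneg_of_mem_Icc ⟨by linarith, h1⟩
  have hsn : 0 ≤ s := Real.sin_nonneg_of_nonneg_of_le_pi (le_of_lt h0) (by linarith)
  have hjordan : 2 / Real.pi * θ ≤ s := Real.mul_le_sin (le_of_lt h0) h1
  have hπ0 : (0:ℝ) < Real.pi := by linarith
  -- key: E = s²((2π−θ)²−1) + θ(2sc−θ)
  rw [h2]
  have hsq : s ^ 2 ≥ (2 / Real.pi * θ) ^ 2 := by
    have : 0 ≤ 2 / Real.pi * θ := by positivity
    nlinarith
  have hK : (2 * Real.pi - θ) ^ 2 - 1 ≥ (3 * Real.pi / 2) ^ 2 - 1 := by nlinarith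
  have hKpos : (0:ℝ) < (3 * Real.pi / 2) ^ 2 - 1 := by nlinarith
  have hmain : s ^ 2 * ((2 * Real.pi - θ) ^ 2 - 1) > θ ^ 2 := by
    have h3 : s ^ 2 * ((2 * Real.pi - θ) ^ 2 - 1) ≥ (2 / Real.pi * θ) ^ 2 * ((3 * Real.pi / 2) ^ 2 - 1) := by
      nlinarith
    have h4 : (2 / Real.pi * θ) ^ 2 * ((3 * Real.pi / 2) ^ 2 - 1) = 9 * θ ^ 2 - 4 * θ ^ 2 / Real.pi ^ 2 := by
      field_simp; ring
    have hp2 : (0:ℝ) < Real.pi ^ 2 := by positivity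
    have h5 : 4 * θ ^ 2 / Real.pi ^ 2 < 8 * θ ^ 2 := by
      rw [div_lt_iff₀ hp2]
      nlinarith [mul_pos h0 h0, mul_nonneg (mul_pos h0 h0).le (by nlinarith : (0:ℝ) ≤ Real.pi ^ 2 - 9)]
    linarith
  nlinarith [mul_nonneg (mul_nonneg h0.le hsn) hcn]
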